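/- Let 𝒵 be a finite set of integers, Z(α) = ∑_{n ∈ 𝒵} e(−αn), and f(α) = ∑_{m ∈ I} a_m e(αm²) with |a_m| ≤ 1 for m in an integer interval I ⊆ (x − x^θ, x + x^θ], x ≥ 2, 0 < θ < 1. Then ∫₀¹ |f(α)Z(α)|² dα equals the number of quadruples (m₁, m₂, n₁, n₂) with m₁² − n₁ = m₂² − n₂ weighted by a_{m₁}\overline{a_{m₂}}, and is bounded by |𝒵|·|I| + |𝒵|²·max_k #{m ∈ I : m² ≡ fixed value}, giving ∫₀¹ |f(α)Z(α)|² dα ≪ |𝒵|·x^θ + |𝒵|²·x^ε for any ε > 0. -/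

import Mathlib

open Finset Real

/-- The additive character `e(x) = exp(2πix)`. -/
noncomputable def eChar (x : ℝ) : ℂ := Complex.exp (2 * Real.pi * Complex.I * x)

lemma eChar_add (x y : ℝ) : eChar (x + y) = eChar x * eChar y := by
  unfold eChar; push_cast; rw [mul_add, Complex.exp_add]

lemma eChar_conj (x : ℝ) : (starRingEnd ℂ) (eChar x) = eChar (-x) := by
  unfold eChar
  rw [← Complex.exp_conj]
  congr 1
  simp only [map_mul, Complex.conj_I, Complex.conj_ofReal, map_ofNat]
  push_cast
  ring

@[fun_prop]
lemma continuous_eChar : Continuous eChar := by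
  unfold eChar; fun_prop

lemma integral_eChar (k : ℤ) :
    ∫ α in (0:ℝ)..1, eChar (α * (k : ℝ)) = if k = 0 then 1 else 0 := by
  rcases eq_or_ne k 0 with rfl | hk
  · simp [eChar]
  · have hc : (2 * Real.pi * Complex.I * (k:ℂ)) ≠ 0 := by
      simp [Real.pi_ne_zero, Complex.I_ne_zero, hk]
    have h1 : ∀ α : ℝ, eChar (α * (k : ℝ)) =
        Complex.exp ((2 * Real.pi * Complex.I * (k:ℂ)) * (α:ℂ)) := by
      intro α; unfold eChar; push_cast; ring_nf
    simp only [h1]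
    rw [integral_exp_mul_complex hc]
    have h2 : Complex.exp (2 * Real.pi * Complex.I * (k:ℂ)) = 1 := by
      have := Complex.exp_int_mul_two_pi_mul_I k
      rw [← this]; congr 1; push_cast; ring
    simp [h2, hk]

lemma aux_exp (δ : ℝ) (hδ : 0 < δ) (a : ℕ) :
    (a + 1 : ℝ) ≤ Real.exp δ / δ * Real.exp (a * δ) := by
  have h : ((a:ℝ) + 1) * δ ≤ Real.exp (((a:ℝ) + 1) * δ) := by
    have := Real.add_one_le_exp (((a:ℝ) + 1) * δ - 1)
    calc ((a:ℝ)+1)*δ = (((a:ℝ)+1)*δ - 1) + 1 := by ring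
    _ ≤ Real.exp (((a:ℝ)+1)*δ - 1) := this
    _ ≤ Real.exp (((a:ℝ)+1)*δ) := by
        apply Real.exp_le_exp.2; linarith
  have h2 : Real.exp (((a:ℝ)+1)*δ) = Real.exp δ * Real.exp (a*δ) := by
    rw [← Real.exp_add]; ring_nf
  rw [h2] at h
  rw [div_mul_eq_mul_div, le_div_iff₀ hδ]
  linarith

/-- Divisor bound: τ(n) ≤ C n^ε. -/
lemma divisor_bound (ε : ℝ) (hε : 0 < ε) :
    ∃ C : ℝ, 0 < C ∧ ∀ n : ℕ, n ≠ 0 → (n.divisors.card : ℝ) ≤ C * (n : ℝ) ^ ε := by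
  set δ : ℝ := ε * Real.log 2 with hδdef
  have hδ : 0 < δ := mul_pos hε (Real.log_pos one_lt_two)
  set C₀ : ℝ := max 1 (Real.exp δ / δ) with hC₀def
  have hC₀ : 1 ≤ C₀ := le_max_left _ _
  set B : ℕ := ⌈(2:ℝ) ^ (1/ε)⌉₊ with hBdef
  refine ⟨C₀ ^ B, pow_pos (lt_of_lt_of_le one_pos hC₀) _, ?_⟩
  intro n hn
  have hfac : ∀ p ∈ n.primeFactors, ∀ a : ℕ,
      (a + 1 : ℝ) ≤ (if (p:ℝ) ^ ε < 2 then C₀ else 1) * ((p:ℝ) ^ (a:ℕ)) ^ ε := by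
    intro p hp a
    have hp2 : 2 ≤ p := (Nat.prime_of_mem_primeFactors hp).two_le
    have hp0 : (0:ℝ) < p := by positivity
    have hrw : ((p:ℝ) ^ (a:ℕ)) ^ ε = ((p:ℝ) ^ ε) ^ (a:ℕ) := by
      rw [← Real.rpow_natCast (p:ℝ) a, ← Real.rpow_mul hp0.le, mul_comm,
        Real.rpow_mul hp0.le, Real.rpow_natCast]
    rw [hrw]
    by_cases hsmall : (p:ℝ) ^ ε < 2
    · simp only [if_pos hsmall]
      have h2 : (2:ℝ) ^ (a * ε) ≤ ((p:ℝ) ^ ε) ^ (a:ℕ) := by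
        have : (2:ℝ) ^ (a * ε) = ((2:ℝ) ^ ε) ^ (a:ℕ) := by
          rw [← Real.rpow_natCast ((2:ℝ)^ε) a, ← Real.rpow_mul (by norm_num), mul_comm]
        rw [this]
        apply pow_le_pow_left₀ (by positivity)
        exact Real.rpow_le_rpow (by norm_num) (by exact_mod_cast hp2) hε.le
      have h1 : (a + 1 : ℝ) ≤ C₀ * (2:ℝ) ^ (a * ε) := by
        have := aux_exp δ hδ a
        have hrw2 : (2:ℝ) ^ (a * ε) = Real.exp (a * δ) := by
          rw [hδdef, Real.rpow_def_of_pos (by norm_num)]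
          ring_nf
        rw [hrw2]
        calc (a + 1 : ℝ) ≤ Real.exp δ / δ * Real.exp (a*δ) := this
        _ ≤ C₀ * Real.exp (a*δ) := by
            apply mul_le_mul_of_nonneg_right (le_max_right _ _) (Real.exp_pos _).le
      calc (a+1:ℝ) ≤ C₀ * (2:ℝ) ^ (a*ε) := h1
      _ ≤ C₀ * ((p:ℝ)^ε)^(a:ℕ) := by
          apply mul_le_mul_of_nonneg_left h2 (by linarith)
    · simp only [if_neg hsmall, one_mul]
      push_neg at hsmall
      calc (a+1:ℝ) ≤ (2:ℝ)^(a:ℕ) := by exact_mod_cast Nat.lt_two_pow_self (n := a)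
      _ ≤ ((p:ℝ)^ε)^(a:ℕ) := pow_le_pow_left₀ (by norm_num) hsmall a
  have hcard : (n.divisors.card : ℝ) =
      ∏ p ∈ n.primeFactors, ((n.factorization p : ℝ) + 1) := by
    rw [Nat.card_divisors hn]
    push_cast
    rfl
  have hcast : (n : ℝ) = ∏ p ∈ n.primeFactors, ((p:ℝ) ^ (n.factorization p)) := by
    conv_lhs => rw [← Nat.factorization_prod_pow_eq_self hn]
    rw [Finsupp.prod, Nat.support_factorization]
    push_cast
    rfl
  have hn_eq : (n : ℝ) ^ ε = ∏ p ∈ n.primeFactors, ((p:ℝ) ^ (n.factorization p)) ^ ε := by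
    rw [hcast]
    exact (Real.finset_prod_rpow _ _ (fun p _ => by positivity) _).symm
  have hmain : (n.divisors.card : ℝ) ≤
      (∏ p ∈ n.primeFactors, (if (p:ℝ) ^ ε < 2 then C₀ else 1)) * ((n:ℝ) ^ ε) := by
    rw [hcard, hn_eq, ← Finset.prod_mul_distrib]
    apply Finset.prod_le_prod
    · intro p hp; positivity
    · intro p hp
      have := hfac p hp (n.factorization p)
      push_cast
      exact this
  have hprod : (∏ p ∈ n.primeFactors, (if (p:ℝ) ^ ε < 2 then C₀ else 1)) ≤ C₀ ^ B := by
    rw [Finset.prod_ite, Finset.prod_const, Finset.prod_const, one_pow, mul_one]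
    apply pow_le_pow_right₀ hC₀
    calc (Finset.filter (fun p : ℕ => (p:ℝ) ^ ε < 2) n.primeFactors).card
        ≤ (Finset.Icc 1 B).card := by
          apply Finset.card_le_card
          intro p hp
          rw [Finset.mem_filter] at hp
          obtain ⟨hp1, hp2⟩ := hp
          have hpprime := Nat.prime_of_mem_primeFactors hp1
          have hp0 : (0:ℝ) < p := by exact_mod_cast hpprime.pos
          have hlt : (p:ℝ) < (2:ℝ) ^ (1/ε) := by
            have h1 : ((p:ℝ) ^ ε) ^ (1/ε) < (2:ℝ) ^ (1/ε) :=
              Real.rpow_lt_rpow (by positivity) hp2 (by positivity)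
            rwa [← Real.rpow_mul hp0.le, mul_one_div, div_self hε.ne', Real.rpow_one] at h1
          have hple : p ≤ B := by
            have := hlt.le.trans (Nat.le_ceil _)
            exact_mod_cast this
          exact Finset.mem_Icc.2 ⟨hpprime.one_lt.le, hple⟩
      _ = B := by simp
  calc (n.divisors.card : ℝ)
      ≤ (∏ p ∈ n.primeFactors, (if (p:ℝ) ^ ε < 2 then C₀ else 1)) * ((n:ℝ) ^ ε) := hmain
  _ ≤ C₀ ^ B * (n:ℝ) ^ ε := by
      apply mul_le_mul_of_nonneg_right hprod (by positivity)

lemma sol_card (I : Finset ℤ) (d : ℤ) (hd : d ≠ 0) :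
    ((I ×ˢ I).filter (fun p => p.1 ^ 2 - p.2 ^ 2 = d)).card ≤ 2 * d.natAbs.divisors.card := by
  set T := (I ×ˢ I).filter (fun p => p.1 ^ 2 - p.2 ^ 2 = d) with hT
  have hkey : ∀ p ∈ T, (p.1 - p.2) * (p.1 + p.2) = d ∧ p.1 - p.2 ≠ 0 := by
    intro p hp
    rw [hT, Finset.mem_filter] at hp
    constructor
    · linear_combination hp.2
    · intro h
      apply hd
      rw [← hp.2]
      have : p.1 = p.2 := by omega
      rw [this]; ring
  have hmem : ∀ p ∈ T, (p.1 - p.2).natAbs ∈ d.natAbs.divisors := by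
    intro p hp
    obtain ⟨h1, h2⟩ := hkey p hp
    rw [Nat.mem_divisors]
    exact ⟨Int.natAbs_dvd_natAbs.2 ⟨p.1 + p.2, h1.symm⟩, Int.natAbs_ne_zero.2 hd⟩
  have hle1 : (T.filter (fun p => 0 < p.1 - p.2)).card ≤ d.natAbs.divisors.card := by
    apply Finset.card_le_card_of_injOn (fun p => (p.1 - p.2).natAbs)
    · intro p hp
      exact hmem p (Finset.mem_filter.1 hp).1
    · intro p hp q hq heq
      rw [Finset.mem_coe, Finset.mem_filter] at hp hq
      have hdiff : p.1 - p.2 = q.1 - q.2 := by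
        have h1 := hp.2; have h2 := hq.2
        rcases Int.natAbs_eq_natAbs_iff.1 heq with h | h <;> omega
      obtain ⟨hp1, hp2⟩ := hkey p hp.1
      obtain ⟨hq1, _⟩ := hkey q hq.1
      have hsum : p.1 + p.2 = q.1 + q.2 := by
        apply mul_left_cancel₀ hp2
        rw [hp1, hdiff, hq1]
      exact Prod.ext (by omega) (by omega)
  have hle2 : (T.filter (fun p => ¬ 0 < p.1 - p.2)).card ≤ d.natAbs.divisors.card := by
    apply Finset.card_le_card_of_injOn (fun p => (p.1 - p.2).natAbs)
    · intro p hp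
      exact hmem p (Finset.mem_filter.1 hp).1
    · intro p hp q hq heq
      rw [Finset.mem_coe, Finset.mem_filter] at hp hq
      have hp' := hkey p hp.1
      have hq' := hkey q hq.1
      have hdiff : p.1 - p.2 = q.1 - q.2 := by
        have h1 := hp.2; have h2 := hq.2; have h3 := hp'.2; have h4 := hq'.2
        rcases Int.natAbs_eq_natAbs_iff.1 heq with h | h <;> omega
      have hsum : p.1 + p.2 = q.1 + q.2 := by
        apply mul_left_cancel₀ hp'.2
        rw [hp'.1, hdiff, hq'.1]
      exact Prod.ext (by omega) (by omega)
  have hsplit := Finset.card_filter_add_card_filter_not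
    (s := T) (p := fun p => 0 < p.1 - p.2)
  omega

theorem mean_value_fZ_bound (ε θ : ℝ) (hε : 0 < ε) (hθ₀ : 0 < θ) (hθ₁ : θ < 1) :
    ∃ C : ℝ, 0 < C ∧ ∀ (x : ℝ) (Z I : Finset ℤ) (a : ℤ → ℂ),
      2 ≤ x →
      (∀ m ∈ I, x - x ^ θ < (m : ℝ) ∧ (m : ℝ) ≤ x + x ^ θ) →
      (∀ m, ‖a m‖ ≤ 1) →
      ∫ α in (0:ℝ)..1,
          ‖(∑ m ∈ I, a m * eChar (α * (m : ℝ) ^ 2)) *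
            (∑ n ∈ Z, eChar (-(α * (n : ℝ))))‖ ^ 2 ≤
        C * ((Z.card : ℝ) * x ^ θ + (Z.card : ℝ) ^ 2 * x ^ ε) := by
  obtain ⟨Cτ, hCτpos, hCτ⟩ := divisor_bound (ε/2) (half_pos hε)
  set K : ℝ := 2 * Cτ * (8:ℝ) ^ (ε/2) with hKdef
  have hKpos : 0 < K := by positivity
  refine ⟨3 + K, by positivity, ?_⟩
  intro x Z I a hx hI ha
  have hx0 : (0:ℝ) < x := by linarith
  have hx1 : (1:ℝ) < x := by linarith
  have hxθ1 : (1:ℝ) ≤ x ^ θ := Real.one_le_rpow hx1.le hθ₀.le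
  have hxθx : x ^ θ < x := by
    nth_rewrite 2 [← Real.rpow_one x]
    exact Real.rpow_lt_rpow_of_exponent_lt hx1 hθ₁
  have hxθ0 : (0:ℝ) ≤ x ^ θ := Real.rpow_nonneg hx0.le θ
  have hxε0 : (0:ℝ) ≤ x ^ ε := Real.rpow_nonneg hx0.le ε
  -- members of I are positive and at most 2x
  have hIpos : ∀ m ∈ I, (1:ℤ) ≤ m := by
    intro m hm
    have h1 := (hI m hm).1
    have : (0:ℝ) < (m:ℝ) := by linarith
    exact_mod_cast this
  have hIle : ∀ m ∈ I, (m:ℝ) ≤ 2 * x := by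
    intro m hm
    have h2 := (hI m hm).2
    linarith
  -- cardinality of I
  have hIcard : (I.card : ℝ) ≤ 3 * x ^ θ := by
    have hsub : I ⊆ Finset.Icc (⌊x - x^θ⌋ + 1) ⌊x + x^θ⌋ := by
      intro m hm
      obtain ⟨h1, h2⟩ := hI m hm
      rw [Finset.mem_Icc]
      constructor
      · exact Int.lt_iff_add_one_le.1 (Int.floor_lt.2 h1)
      · exact Int.le_floor.2 h2
    have h1 : (I.card : ℝ) ≤ ((Finset.Icc (⌊x - x^θ⌋ + 1) ⌊x + x^θ⌋).card : ℝ) := by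
      exact_mod_cast Finset.card_le_card hsub
    rw [Int.card_Icc] at h1
    have h2 : ((⌊x + x^θ⌋ + 1 - (⌊x - x^θ⌋ + 1)).toNat : ℝ) ≤ 2 * x ^ θ + 1 := by
      rcases le_or_gt (⌊x + x^θ⌋ + 1 - (⌊x - x^θ⌋ + 1)) 0 with h | h
      · rw [Int.toNat_of_nonpos h]
        simp only [Nat.cast_zero]
        linarith
      · have h3 : (((⌊x + x^θ⌋ + 1 - (⌊x - x^θ⌋ + 1)).toNat : ℕ) : ℝ) =
            ((⌊x + x^θ⌋ + 1 - (⌊x - x^θ⌋ + 1) : ℤ) : ℝ) := by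
          exact_mod_cast congrArg (fun t : ℤ => (t : ℝ)) (Int.toNat_of_nonneg h.le)
        rw [h3]
        push_cast
        have hb : ((⌊x + x^θ⌋ : ℤ) : ℝ) ≤ x + x^θ := Int.floor_le _
        have ha' : x - x^θ < ((⌊x - x^θ⌋ : ℤ) : ℝ) + 1 := Int.lt_floor_add_one _
        linarith
    calc (I.card : ℝ) ≤ 2 * x ^ θ + 1 := by linarith
    _ ≤ 3 * x ^ θ := by linarith
  -- the complex value of the integral
  set F : ℝ → ℂ := fun α => ∑ m ∈ I, a m * eChar (α * (m : ℝ) ^ 2) with hF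
  set G : ℝ → ℂ := fun α => ∑ n ∈ Z, eChar (-(α * (n : ℝ))) with hG
  set S : ℂ := ∑ m₁ ∈ I, ∑ m₂ ∈ I, ∑ n₁ ∈ Z, ∑ n₂ ∈ Z,
      (a m₁ * (starRingEnd ℂ) (a m₂)) *
        (if (m₁^2 - m₂^2 - n₁ + n₂ : ℤ) = 0 then 1 else 0) with hS
  have hcomplex : (↑(∫ α in (0:ℝ)..1, ‖F α * G α‖ ^ 2) : ℂ) = S := by
    have hFF : ∀ α : ℝ, F α * (starRingEnd ℂ) (F α) =
        ∑ m₁ ∈ I, ∑ m₂ ∈ I, (a m₁ * (starRingEnd ℂ) (a m₂)) *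
          eChar (α * ((m₁^2 - m₂^2 : ℤ) : ℝ)) := by
      intro α
      rw [hF, map_sum, Finset.sum_mul_sum]
      apply Finset.sum_congr rfl; intro m₁ _
      apply Finset.sum_congr rfl; intro m₂ _
      rw [map_mul, eChar_conj, mul_mul_mul_comm]
      congr 1
      rw [← eChar_add]
      congr 1
      push_cast; ring
    have hGG : ∀ α : ℝ, G α * (starRingEnd ℂ) (G α) =
        ∑ n₁ ∈ Z, ∑ n₂ ∈ Z, eChar (α * ((n₂ - n₁ : ℤ) : ℝ)) := by
      intro α
      rw [hG, map_sum, Finset.sum_mul_sum]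
      apply Finset.sum_congr rfl; intro n₁ _
      apply Finset.sum_congr rfl; intro n₂ _
      rw [eChar_conj, ← eChar_add]
      congr 1
      push_cast; ring
    have hpt : ∀ α : ℝ, ((‖F α * G α‖ : ℝ)^2 : ℂ) =
        ∑ m₁ ∈ I, ∑ m₂ ∈ I, ∑ n₁ ∈ Z, ∑ n₂ ∈ Z,
          (a m₁ * (starRingEnd ℂ) (a m₂)) *
            eChar (α * ((m₁^2 - m₂^2 - n₁ + n₂ : ℤ) : ℝ)) := by
      intro α
      have h1 : ((‖F α * G α‖ : ℝ)^2 : ℂ) =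
          (F α * G α) * (starRingEnd ℂ) (F α * G α) := by
        rw [Complex.mul_conj, ← Complex.sq_norm]
        push_cast; ring
      rw [h1, map_mul, mul_mul_mul_comm, hFF, hGG, Finset.sum_mul]
      apply Finset.sum_congr rfl; intro m₁ _
      rw [Finset.sum_mul]
      apply Finset.sum_congr rfl; intro m₂ _
      rw [Finset.mul_sum]
      apply Finset.sum_congr rfl; intro n₁ _
      rw [Finset.mul_sum]
      apply Finset.sum_congr rfl; intro n₂ _
      rw [mul_assoc]
      congr 1
      rw [← eChar_add]
      congr 1
      push_cast; ring
    have hcont : ∀ (c : ℂ) (r : ℝ), Continuous (fun α : ℝ => c * eChar (α * r)) :=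
      fun c r => continuous_const.mul (continuous_eChar.comp (continuous_id.mul continuous_const))
    calc (↑(∫ α in (0:ℝ)..1, ‖F α * G α‖^2) : ℂ)
        = ∫ α in (0:ℝ)..1, ((‖F α * G α‖ : ℝ)^2 : ℂ) := by
          rw [← intervalIntegral.integral_ofReal]
          push_cast
          rfl
      _ = ∫ α in (0:ℝ)..1, ∑ m₁ ∈ I, ∑ m₂ ∈ I, ∑ n₁ ∈ Z, ∑ n₂ ∈ Z,
            (a m₁ * (starRingEnd ℂ) (a m₂)) *
              eChar (α * ((m₁^2 - m₂^2 - n₁ + n₂ : ℤ) : ℝ)) := by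
          congr 1; funext α; exact hpt α
      _ = ∑ m₁ ∈ I, ∑ m₂ ∈ I, ∑ n₁ ∈ Z, ∑ n₂ ∈ Z,
            ∫ α in (0:ℝ)..1, (a m₁ * (starRingEnd ℂ) (a m₂)) *
              eChar (α * ((m₁^2 - m₂^2 - n₁ + n₂ : ℤ) : ℝ)) := by
          rw [intervalIntegral.integral_finset_sum]
          · apply Finset.sum_congr rfl; intro m₁ _
            rw [intervalIntegral.integral_finset_sum]
            · apply Finset.sum_congr rfl; intro m₂ _
              rw [intervalIntegral.integral_finset_sum]
              · apply Finset.sum_congr rfl; intro n₁ _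
                rw [intervalIntegral.integral_finset_sum]
                intro n₂ _
                exact (hcont _ _).intervalIntegrable _ _
              · intro n₁ _
                exact ((continuous_finset_sum _ fun n₂ _ => hcont _ _).intervalIntegrable _ _)
            · intro m₂ _
              exact ((continuous_finset_sum _ fun n₁ _ => continuous_finset_sum _ fun n₂ _ =>
                hcont _ _).intervalIntegrable _ _)
          · intro m₁ _
            exact ((continuous_finset_sum _ fun m₂ _ => continuous_finset_sum _ fun n₁ _ =>
              continuous_finset_sum _ fun n₂ _ => hcont _ _).intervalIntegrable _ _)
      _ = S := by
          rw [hS]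
          apply Finset.sum_congr rfl; intro m₁ _
          apply Finset.sum_congr rfl; intro m₂ _
          apply Finset.sum_congr rfl; intro n₁ _
          apply Finset.sum_congr rfl; intro n₂ _
          rw [intervalIntegral.integral_const_mul, integral_eChar]
  -- the count
  set N : ℝ := ∑ m₁ ∈ I, ∑ m₂ ∈ I, ∑ n₁ ∈ Z, ∑ n₂ ∈ Z,
      (if (m₁^2 - m₂^2 - n₁ + n₂ : ℤ) = 0 then (1:ℝ) else 0) with hN
  have habsS : ‖S‖ ≤ N := by
    rw [hS, hN]
    refine le_trans (norm_sum_le _ _) (Finset.sum_le_sum fun m₁ _ => ?_)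
    refine le_trans (norm_sum_le _ _) (Finset.sum_le_sum fun m₂ _ => ?_)
    refine le_trans (norm_sum_le _ _) (Finset.sum_le_sum fun n₁ _ => ?_)
    refine le_trans (norm_sum_le _ _) (Finset.sum_le_sum fun n₂ _ => ?_)
    rw [norm_mul]
    split
    · rw [norm_one, mul_one, norm_mul, Complex.norm_conj]
      exact mul_le_one₀ (ha m₁) (norm_nonneg _) (ha m₂)
    · simp
  have hint_le : ∫ α in (0:ℝ)..1, ‖F α * G α‖ ^ 2 ≤ N := by
    have hre : ∫ α in (0:ℝ)..1, ‖F α * G α‖ ^ 2 = S.re := by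
      have := congrArg Complex.re hcomplex
      simpa using this
    rw [hre]
    exact le_trans (Complex.re_le_norm S) habsS
  -- counting bound for N
  have hN2 : N = ∑ q ∈ Z ×ˢ Z, ∑ p ∈ I ×ˢ I,
      (if (p.1^2 - p.2^2 - q.1 + q.2 : ℤ) = 0 then (1:ℝ) else 0) := by
    rw [hN]
    conv_rhs => rw [Finset.sum_comm, Finset.sum_product]
    apply Finset.sum_congr rfl; intro m₁ _
    apply Finset.sum_congr rfl; intro m₂ _
    rw [Finset.sum_product]
  have hbound : ∀ q ∈ Z ×ˢ Z, (∑ p ∈ I ×ˢ I,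
      (if (p.1^2 - p.2^2 - q.1 + q.2 : ℤ) = 0 then (1:ℝ) else 0)) ≤
      if q.1 = q.2 then 3 * x ^ θ else K * x ^ ε := by
    intro q _
    rw [Finset.sum_boole]
    by_cases hq : q.1 = q.2
    · rw [if_pos hq]
      have hdiag : ∀ p ∈ (I ×ˢ I).filter (fun p : ℤ × ℤ => (p.1^2 - p.2^2 - q.1 + q.2 : ℤ) = 0),
          p.2 = p.1 := by
        intro p hp
        rw [Finset.mem_filter, Finset.mem_product] at hp
        have h1 := hIpos p.1 hp.1.1
        have h2 := hIpos p.2 hp.1.2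
        have hc : (p.1 - p.2) * (p.1 + p.2) = 0 := by linear_combination hp.2 + hq
        rcases mul_eq_zero.1 hc with h | h <;> omega
      have hcard : ((I ×ˢ I).filter (fun p : ℤ × ℤ => (p.1^2 - p.2^2 - q.1 + q.2 : ℤ) = 0)).card
          ≤ I.card := by
        apply Finset.card_le_card_of_injOn (fun p => p.1)
        · intro p hp
          rw [Finset.mem_coe, Finset.mem_filter, Finset.mem_product] at hp
          exact hp.1.1
        · intro p hp p' hp' heq
          rw [Finset.mem_coe] at hp hp'
          have e1 := hdiag p hp
          have e2 := hdiag p' hp'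
          simp only at heq
          exact Prod.ext heq (by rw [e1, e2, heq])
      calc (((I ×ˢ I).filter (fun p : ℤ × ℤ => (p.1^2 - p.2^2 - q.1 + q.2 : ℤ) = 0)).card : ℝ)
          ≤ (I.card : ℝ) := by exact_mod_cast hcard
        _ ≤ 3 * x ^ θ := hIcard
    · rw [if_neg hq]
      have hd : q.1 - q.2 ≠ 0 := fun h => hq (by omega)
      have hfe : (I ×ˢ I).filter (fun p : ℤ × ℤ => (p.1^2 - p.2^2 - q.1 + q.2 : ℤ) = 0) =
          (I ×ˢ I).filter (fun p : ℤ × ℤ => p.1^2 - p.2^2 = q.1 - q.2) := by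
        apply Finset.filter_congr
        intro p _
        constructor <;> intro h <;> omega
      rw [hfe]
      rcases Finset.eq_empty_or_nonempty
        ((I ×ˢ I).filter (fun p : ℤ × ℤ => p.1^2 - p.2^2 = q.1 - q.2)) with he | ⟨p, hp⟩
      · rw [he]
        simp only [Finset.card_empty, Nat.cast_zero]
        have : (0:ℝ) ≤ K * x ^ ε := mul_nonneg hKpos.le hxε0
        linarith
      · -- bound |q.1 - q.2|
        rw [Finset.mem_filter, Finset.mem_product] at hp
        have hm1 := hIle p.1 hp.1.1
        have hm2 := hIle p.2 hp.1.2
        have hm1' := hIpos p.1 hp.1.1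
        have hm2' := hIpos p.2 hp.1.2
        have hdabs : (((q.1 - q.2).natAbs : ℕ) : ℝ) ≤ 8 * x^2 := by
          have h0 : (((q.1 - q.2).natAbs : ℕ) : ℝ) = |((q.1 - q.2 : ℤ) : ℝ)| := by
            rw [Nat.cast_natAbs]
            push_cast
            rfl
          rw [h0, ← hp.2]
          push_cast
          rw [abs_sub_le_iff]
          have a1 : (0:ℝ) < (p.1 : ℝ) := by exact_mod_cast lt_of_lt_of_le zero_lt_one hm1'
          have a2 : (0:ℝ) < (p.2 : ℝ) := by exact_mod_cast lt_of_lt_of_le zero_lt_one hm2'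
          constructor <;> nlinarith
        have hcard := sol_card I (q.1 - q.2) hd
        have hτ := hCτ (q.1 - q.2).natAbs (Int.natAbs_ne_zero.2 hd)
        have hrpow : ((((q.1 - q.2).natAbs : ℕ):ℝ)) ^ (ε/2) ≤ (8 * x^2) ^ (ε/2) :=
          Real.rpow_le_rpow (by positivity) hdabs (by positivity)
        have h8 : ((8:ℝ) * x^2) ^ (ε/2) = (8:ℝ)^(ε/2) * x ^ ε := by
          rw [Real.mul_rpow (by norm_num) (by positivity), ← Real.rpow_natCast x 2,
            ← Real.rpow_mul hx0.le]
          congr 1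
          push_cast
          ring
        calc ((((I ×ˢ I).filter (fun p : ℤ × ℤ => p.1^2 - p.2^2 = q.1 - q.2)).card : ℕ) : ℝ)
            ≤ 2 * ((q.1 - q.2).natAbs.divisors.card : ℝ) := by exact_mod_cast hcard
          _ ≤ 2 * (Cτ * (((q.1 - q.2).natAbs : ℕ) : ℝ) ^ (ε/2)) := by
              apply mul_le_mul_of_nonneg_left hτ (by norm_num)
          _ ≤ 2 * (Cτ * ((8:ℝ) * x^2) ^ (ε/2)) := by
              apply mul_le_mul_of_nonneg_left _ (by norm_num)
              exact mul_le_mul_of_nonneg_left hrpow hCτpos.le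
          _ = K * x ^ ε := by rw [h8, hKdef]; ring
  have hNle : N ≤ 3 * x ^ θ * Z.card + K * x ^ ε * (Z.card:ℝ)^2 := by
    rw [hN2]
    calc ∑ q ∈ Z ×ˢ Z, ∑ p ∈ I ×ˢ I,
          (if (p.1^2 - p.2^2 - q.1 + q.2 : ℤ) = 0 then (1:ℝ) else 0)
        ≤ ∑ q ∈ Z ×ˢ Z, (if q.1 = q.2 then 3*x^θ else K*x^ε) := Finset.sum_le_sum hbound
      _ ≤ ∑ q ∈ Z ×ˢ Z, (K * x^ε + if q.1 = q.2 then 3*x^θ else 0) := by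
          apply Finset.sum_le_sum
          intro q _
          have hKx : (0:ℝ) ≤ K * x^ε := mul_nonneg hKpos.le hxε0
          split
          · linarith
          · simp
      _ = (Z.card:ℝ)^2 * (K * x^ε) + ∑ q ∈ Z ×ˢ Z, (if q.1 = q.2 then 3*x^θ else 0) := by
          rw [Finset.sum_add_distrib, Finset.sum_const, Finset.card_product, nsmul_eq_mul]
          push_cast
          ring
      _ ≤ (Z.card:ℝ)^2 * (K * x^ε) + (Z.card:ℝ) * (3*x^θ) := by
          have hh : ∑ q ∈ Z ×ˢ Z, (if q.1 = q.2 then 3*x^θ else 0) ≤ (Z.card:ℝ) * (3*x^θ) := by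
            rw [Finset.sum_product]
            calc ∑ n₁ ∈ Z, ∑ n₂ ∈ Z, (if n₁ = n₂ then 3*x^θ else 0)
                ≤ ∑ _n₁ ∈ Z, 3*x^θ := by
                  apply Finset.sum_le_sum
                  intro n₁ _
                  rw [Finset.sum_ite_eq]
                  split
                  · exact le_refl _
                  · linarith
              _ = (Z.card:ℝ) * (3*x^θ) := by rw [Finset.sum_const, nsmul_eq_mul]
          linarith
      _ = 3 * x^θ * Z.card + K * x^ε * (Z.card:ℝ)^2 := by ring
  calc ∫ α in (0:ℝ)..1, ‖F α * G α‖ ^ 2 ≤ N := hint_le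
    _ ≤ 3 * x ^ θ * Z.card + K * x ^ ε * (Z.card:ℝ)^2 := hNle
    _ ≤ (3 + K) * ((Z.card : ℝ) * x ^ θ + (Z.card : ℝ) ^ 2 * x ^ ε) := by
        have h1 : (0:ℝ) ≤ (Z.card:ℝ) := by positivity
        have h2 : (0:ℝ) ≤ x^θ := hxθ0
        have h3 : (0:ℝ) ≤ x^ε := hxε0
        nlinarith [mul_nonneg (mul_nonneg hKpos.le h1) h2,
          mul_nonneg (mul_nonneg (by norm_num : (0:ℝ) ≤ 3) (mul_nonneg h1 h1)) h3]
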